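/- Let f(x) = (1/2)(x^T P x + 2 q^T x + r) + I_{F,g}(x) be an extended quadratic function on R^n, where I_{F,g}(x) = 0 if Fx + g = 0 and +∞ otherwise, and suppose the constraint set {x : Fx + g = 0} is nonempty with free parameter representation {x_0 + V_2 z : z ∈ R^l} where the columns of V_2 form a basis of the nullspace of F. Then f is convex if and only if V_2^T P V_2 is positive semidefinite. -/

import Mathlib

open Matrix

/-- The quadratic part of an extended quadratic function:
`(1/2)(xᵀ P x + 2 qᵀ x + r)`. -/
noncomputable def quadPart {n : ℕ} (P : Matrix (Fin n) (Fin n) ℝ) (q : Fin n → ℝ) (r : ℝ)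
    (x : Fin n → ℝ) : ℝ :=
  (1 / 2) * (x ⬝ᵥ P.mulVec x + 2 * (q ⬝ᵥ x) + r)

/-- An extended quadratic function: quadratic part plus the `0/+∞` indicator of
`{x | Fx + g = 0}`, valued in the extended reals. -/
noncomputable def extQuad {n : ℕ} {ι : Type} [Fintype ι]
    (P : Matrix (Fin n) (Fin n) ℝ) (q : Fin n → ℝ) (r : ℝ)
    (F : Matrix ι (Fin n) ℝ) (g : ι → ℝ) (x : Fin n → ℝ) : EReal :=
  if F.mulVec x + g = 0 then ((quadPart P q r x : ℝ) : EReal) else ⊤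

/-- Convexity of an extended-real-valued function. -/
def ERealConvexOn {E : Type} [AddCommMonoid E] [Module ℝ E] (f : E → EReal) : Prop :=
  ∀ x y : E, ∀ a b : ℝ, 0 ≤ a → 0 ≤ b → a + b = 1 →
    f (a • x + b • y) ≤ (a : EReal) * f x + (b : EReal) * f y

/-- Key algebraic identity: the convexity gap of a quadratic. -/
lemma quad_combo {n : ℕ} (P : Matrix (Fin n) (Fin n) ℝ) (q : Fin n → ℝ) (r : ℝ)
    (x y : Fin n → ℝ) (a b : ℝ) (h : a + b = 1) :
    a * quadPart P q r x + b * quadPart P q r y - quadPart P q r (a • x + b • y)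
      = (a * b / 2) * ((x - y) ⬝ᵥ P.mulVec (x - y)) := by
  have hb : b = 1 - a := by linarith
  subst hb
  simp only [quadPart, mulVec_add, mulVec_smul, mulVec_sub, dotProduct_add, add_dotProduct,
    smul_dotProduct, dotProduct_smul, sub_dotProduct, dotProduct_sub, smul_eq_mul]
  ring

lemma extQuad_ne_bot {n : ℕ} {ι : Type} [Fintype ι]
    (P : Matrix (Fin n) (Fin n) ℝ) (q : Fin n → ℝ) (r : ℝ)
    (F : Matrix ι (Fin n) ℝ) (g : ι → ℝ) (x : Fin n → ℝ) :
    extQuad P q r F g x ≠ ⊥ := by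
  unfold extQuad
  split <;> simp

lemma coe_mul_ne_bot (b : ℝ) (hb : 0 < b) (x : EReal) (hx : x ≠ ⊥) : (b : EReal) * x ≠ ⊥ := by
  induction x using EReal.rec with
  | bot => exact absurd rfl hx
  | coe y => rw [← EReal.coe_mul]; exact EReal.coe_ne_bot _
  | top => rw [EReal.coe_mul_top_of_pos hb]; exact top_ne_bot

/-- an extended quadratic with nonempty constraint set, with free parameter
representation `x = x₀ + V₂ z` (columns of `V₂` a basis of the nullspace of `F`),
is convex iff `V₂ᵀ P V₂` is positive semidefinite. -/
theorem extQuad_convex_iff {n l p : ℕ}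
    (P : Matrix (Fin n) (Fin n) ℝ) (hP : P.IsSymm) (q : Fin n → ℝ) (r : ℝ)
    (F : Matrix (Fin p) (Fin n) ℝ) (g : Fin p → ℝ)
    (x₀ : Fin n → ℝ) (hx₀ : F.mulVec x₀ + g = 0)
    (V₂ : Matrix (Fin n) (Fin l) ℝ)
    (hV₂ : ∀ x, F.mulVec x = 0 ↔ ∃ z, x = V₂.mulVec z)
    (hV₂inj : ∀ z, V₂.mulVec z = 0 → z = 0) :
    ERealConvexOn (extQuad P q r F g) ↔ (V₂.transpose * P * V₂).PosSemidef := by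
  have hform : ∀ z : Fin l → ℝ,
      z ⬝ᵥ (V₂.transpose * P * V₂).mulVec z = (V₂.mulVec z) ⬝ᵥ P.mulVec (V₂.mulVec z) := by
    intro z
    rw [← mulVec_mulVec, ← mulVec_mulVec, dotProduct_mulVec, vecMul_transpose]
  constructor
  · intro hconv
    refine Matrix.posSemidef_iff_dotProduct_mulVec.mpr ⟨?_, ?_⟩
    · -- Hermitian
      have : (V₂.transpose * P * V₂).transpose = V₂.transpose * P * V₂ := by
        rw [Matrix.transpose_mul, Matrix.transpose_mul, Matrix.transpose_transpose, hP,
          Matrix.mul_assoc]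
      exact Matrix.isHermitian_iff_isSymm.mpr this
    · intro z
      set v := V₂.mulVec z with hv
      have hFv : F.mulVec v = 0 := (hV₂ v).mpr ⟨z, rfl⟩
      have hfeas : ∀ s : ℝ, F.mulVec (x₀ + s • v) + g = 0 := by
        intro s
        rw [mulVec_add, mulVec_smul, hFv]
        simpa using hx₀
      have hkey := hconv (x₀ + v) (x₀ + (-1 : ℝ) • v) (1/2) (1/2) (by norm_num)
        (by norm_num) (by norm_num)
      have hmid : (1/2 : ℝ) • (x₀ + v) + (1/2 : ℝ) • (x₀ + (-1 : ℝ) • v) = x₀ := by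
        funext i; simp; ring
      rw [hmid] at hkey
      have h1 : extQuad P q r F g x₀ = ((quadPart P q r x₀ : ℝ) : EReal) := by
        unfold extQuad; rw [if_pos hx₀]
      have h2 : extQuad P q r F g (x₀ + v) = ((quadPart P q r (x₀ + v) : ℝ) : EReal) := by
        unfold extQuad; rw [if_pos (by simpa using hfeas 1)]
      have h3 : extQuad P q r F g (x₀ + (-1 : ℝ) • v)
          = ((quadPart P q r (x₀ + (-1 : ℝ) • v) : ℝ) : EReal) := by
        unfold extQuad; rw [if_pos (hfeas (-1))]
      rw [h1, h2, h3, ← EReal.coe_mul, ← EReal.coe_mul, ← EReal.coe_add] at hkey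
      have hreal : quadPart P q r x₀ ≤ (1/2 : ℝ) * quadPart P q r (x₀ + v)
          + (1/2 : ℝ) * quadPart P q r (x₀ + (-1 : ℝ) • v) := EReal.coe_le_coe_iff.mp hkey
      have hgap := quad_combo P q r (x₀ + v) (x₀ + (-1 : ℝ) • v) (1/2) (1/2) (by norm_num)
      rw [hmid] at hgap
      have hdiff : (x₀ + v) - (x₀ + (-1 : ℝ) • v) = (2 : ℝ) • v := by
        funext i; simp; ring
      rw [hdiff] at hgap
      have hsmul : ((2:ℝ) • v) ⬝ᵥ P.mulVec ((2:ℝ) • v) = 4 * (v ⬝ᵥ P.mulVec v) := by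
        rw [mulVec_smul, smul_dotProduct, dotProduct_smul, smul_eq_mul, smul_eq_mul]; ring
      rw [hsmul] at hgap
      have hvv : 0 ≤ v ⬝ᵥ P.mulVec v := by nlinarith [hreal, hgap]
      simpa [hform z, hv] using hvv
  · intro hPSD
    intro x y a b ha hb hab
    rcases eq_or_lt_of_le ha with ha0 | ha0
    · have hb1 : b = 1 := by linarith
      subst hb1
      rw [← ha0]
      simp
    rcases eq_or_lt_of_le hb with hb0 | hb0
    · have ha1 : a = 1 := by linarith
      subst ha1
      rw [← hb0]
      simp
    by_cases hx : F.mulVec x + g = 0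
    · by_cases hy : F.mulVec y + g = 0
      · -- both feasible
        have hx' : F.mulVec x = -g := eq_neg_of_add_eq_zero_left hx
        have hy' : F.mulVec y = -g := eq_neg_of_add_eq_zero_left hy
        have hfeas : F.mulVec (a • x + b • y) + g = 0 := by
          rw [mulVec_add, mulVec_smul, mulVec_smul, hx', hy']
          funext i
          simp only [Pi.add_apply, Pi.smul_apply, Pi.neg_apply, Pi.zero_apply, smul_eq_mul]
          linear_combination (-(g i)) * hab
        have hdiff0 : F.mulVec (x - y) = 0 := by
          rw [mulVec_sub, hx', hy', sub_self]
        obtain ⟨z, hz⟩ := (hV₂ (x - y)).mp hdiff0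
        have hpos : 0 ≤ (x - y) ⬝ᵥ P.mulVec (x - y) := by
          rw [hz, ← hform z]
          simpa using hPSD.dotProduct_mulVec_nonneg z
        have hgap := quad_combo P q r x y a b hab
        have hle : quadPart P q r (a • x + b • y)
            ≤ a * quadPart P q r x + b * quadPart P q r y := by
          nlinarith [mul_nonneg (mul_nonneg ha0.le hb0.le) hpos, hgap]
        unfold extQuad
        rw [if_pos hfeas, if_pos hx, if_pos hy, ← EReal.coe_mul, ← EReal.coe_mul,
          ← EReal.coe_add]
        exact EReal.coe_le_coe_iff.mpr hle
      · have hytop : extQuad P q r F g y = ⊤ := by unfold extQuad; rw [if_neg hy]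
        rw [hytop, EReal.coe_mul_top_of_pos hb0, EReal.add_top_of_ne_bot
          (coe_mul_ne_bot a ha0 _ (extQuad_ne_bot P q r F g x))]
        exact le_top
    · have hxtop : extQuad P q r F g x = ⊤ := by unfold extQuad; rw [if_neg hx]
      rw [hxtop, EReal.coe_mul_top_of_pos ha0, EReal.top_add_of_ne_bot
        (coe_mul_ne_bot b hb0 _ (extQuad_ne_bot P q r F g y))]
      exact le_top
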